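/- arXiv:1701.05098 — 8 statements merged into one kernel-verified Lean document; each statement's English description precedes it below -/
import Mathlib

section
/- For every real number x with x ≠ 0 (or, more generally, for every real x, with integer powers interpreted so that 0 raised to a negative exponent is 0) and every positive integer m, one has -i/(x+i)^m = Σ_{n=1}^{m} [ (-1)^n · x^{m-(2n-1)} / (1+x²)^m · C(m, 2n-1) + i · (-1)^n · x^{m-2(n-1)} / (1+x²)^m · C(m, 2(n-1)) ], where C(m,k) is the binomial coefficient (equal to 0 when k > m). -/
open Complex Finset

private lemma sum_range_two_mul' (m : ℕ) (g : ℕ → ℂ) :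
    ∑ k ∈ Finset.range (2 * m), g k
      = ∑ j ∈ Finset.range m, (g (2 * j) + g (2 * j + 1)) := by
  induction m with
  | zero => simp
  | succ n ih =>
      have h : 2 * (n + 1) = (2 * n) + 1 + 1 := by ring
      rw [h, Finset.sum_range_succ, Finset.sum_range_succ, ih, Finset.sum_range_succ]
      ring

theorem neg_i_div_pow_eq_sum (x : ℝ) (hx : x ≠ 0) (m : ℕ) (hm : 0 < m) :
    (-I) / ((x : ℂ) + I) ^ m =
      ∑ n ∈ Finset.Icc 1 m,
        ((-1 : ℂ) ^ n * (x : ℂ) ^ ((m : ℤ) - (2 * (n : ℤ) - 1)) / (1 + (x : ℂ) ^ 2) ^ m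
            * (m.choose (2 * n - 1) : ℂ)
          + I * ((-1 : ℂ) ^ n * (x : ℂ) ^ ((m : ℤ) - 2 * ((n : ℤ) - 1))
            / (1 + (x : ℂ) ^ 2) ^ m * (m.choose (2 * (n - 1)) : ℂ))) := by
  have hxi : (x : ℂ) + I ≠ 0 := by
    intro h
    have h2 := congrArg Complex.im h
    simp at h2
  have hxmi : (x : ℂ) - I ≠ 0 := by
    intro h
    have h2 := congrArg Complex.im h
    simp at h2
  have hfac : (1 : ℂ) + (x : ℂ) ^ 2 = ((x : ℂ) + I) * ((x : ℂ) - I) := by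
    have : (I : ℂ) ^ 2 = -1 := Complex.I_sq
    ring_nf
    rw [this]; ring
  have hden : (1 : ℂ) + (x : ℂ) ^ 2 ≠ 0 := by
    rw [hfac]; exact mul_ne_zero hxi hxmi
  set f : ℕ → ℂ := fun k =>
    (m.choose k : ℂ) * (-I) ^ (k + 1) * (x : ℂ) ^ ((m : ℤ) - k) / (1 + (x : ℂ) ^ 2) ^ m
    with hf
  -- RHS = sum over Icc of paired f
  have step1 : ∑ n ∈ Finset.Icc 1 m,
        ((-1 : ℂ) ^ n * (x : ℂ) ^ ((m : ℤ) - (2 * (n : ℤ) - 1)) / (1 + (x : ℂ) ^ 2) ^ m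
            * (m.choose (2 * n - 1) : ℂ)
          + I * ((-1 : ℂ) ^ n * (x : ℂ) ^ ((m : ℤ) - 2 * ((n : ℤ) - 1))
            / (1 + (x : ℂ) ^ 2) ^ m * (m.choose (2 * (n - 1)) : ℂ)))
      = ∑ n ∈ Finset.Icc 1 m, (f (2 * (n - 1)) + f (2 * n - 1)) := by
    apply Finset.sum_congr rfl
    intro n hn
    simp only [Finset.mem_Icc] at hn
    obtain ⟨hn1, hn2⟩ := hn
    have e1 : ((2 * n - 1 : ℕ) : ℤ) = 2 * (n : ℤ) - 1 := by omega
    have e2 : ((2 * (n - 1) : ℕ) : ℤ) = 2 * ((n : ℤ) - 1) := by omega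
    have e3 : 2 * n - 1 + 1 = 2 * n := by omega
    have e4 : 2 * (n - 1) + 1 = 2 * n - 1 := by omega
    have hIe : (-I) ^ (2 * n) = (-1 : ℂ) ^ n := by
      rw [pow_mul]; norm_num
    have hIo : (-I) ^ (2 * n - 1) = (-1 : ℂ) ^ n * I := by
      have h1 : 2 * n - 1 = 2 * (n - 1) + 1 := by omega
      rw [h1, pow_succ, pow_mul]
      rw [show n = (n - 1) + 1 by omega, pow_succ]
      norm_num
      ring
    rw [hf]
    simp only [e1, e2, e3, e4, hIe, hIo]
    ring
  rw [step1]
  -- reindex Icc to range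
  have step2 : ∑ n ∈ Finset.Icc 1 m, (f (2 * (n - 1)) + f (2 * n - 1))
      = ∑ j ∈ Finset.range m, (f (2 * j) + f (2 * j + 1)) := by
    rw [show Finset.Icc 1 m = Finset.Ico 1 (m + 1) from (Finset.Ico_add_one_right_eq_Icc 1 m).symm,
      Finset.sum_Ico_eq_sum_range]
    apply Finset.sum_congr (by norm_num)
    intro j _
    have e1 : 2 * (1 + j - 1) = 2 * j := by omega
    have e2 : 2 * (1 + j) - 1 = 2 * j + 1 := by omega
    rw [e1, e2]
  rw [step2, ← sum_range_two_mul']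
  -- drop vanishing terms
  have step3 : ∑ k ∈ Finset.range (2 * m), f k = ∑ k ∈ Finset.range (m + 1), f k := by
    symm
    apply Finset.sum_subset
    · intro k hk
      simp only [Finset.mem_range] at hk ⊢
      omega
    · intro k _ hk
      simp only [Finset.mem_range, not_lt] at hk
      have : m.choose k = 0 := Nat.choose_eq_zero_of_lt (by omega)
      simp [hf, this]
  rw [step3]
  -- evaluate the sum
  have step4 : ∑ k ∈ Finset.range (m + 1), f k
      = (-I) * ((x : ℂ) - I) ^ m / (1 + (x : ℂ) ^ 2) ^ m := by
    have hexp : ((x : ℂ) - I) ^ m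
        = ∑ k ∈ Finset.range (m + 1), (-I) ^ k * (x : ℂ) ^ (m - k) * (m.choose k : ℂ) := by
      have := add_pow (-I) (x : ℂ) m
      rw [← this]; ring_nf
    rw [hexp, Finset.mul_sum, Finset.sum_div]
    apply Finset.sum_congr rfl
    intro k hk
    simp only [Finset.mem_range] at hk
    have hk' : k ≤ m := by omega
    have ez : (x : ℂ) ^ ((m : ℤ) - k) = (x : ℂ) ^ (m - k) := by
      rw [show (m : ℤ) - k = ((m - k : ℕ) : ℤ) by omega, zpow_natCast]
    rw [hf]
    simp only [ez]
    rw [pow_succ]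
    ring
  rw [step4]
  -- final algebra
  rw [div_eq_div_iff (pow_ne_zero _ hxi) (pow_ne_zero _ hden)]
  rw [hfac, mul_pow]
  ring
end

section
/- For every real number x with x ≠ 0 (or, more generally, for every real x, with integer powers interpreted so that 0 raised to a negative exponent is 0) and every positive integer m, one has (1/i) · ( 1/(x+i)^m - 1/(x-i)^m ) = 2 · Σ_{n=1}^{m} (-1)^n · x^{m-(2n-1)} / (1+x²)^m · C(m, 2n-1). -/
open Complex Finset

lemma sum_odd_aux (g : ℕ → ℂ) (hg : ∀ j, Even j → g j = 0) (m : ℕ) :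
    ∑ j ∈ Finset.range (2*m+1), g j = ∑ n ∈ Finset.Icc 1 m, g (2*n-1) := by
  induction m with
  | zero => simp [hg 0 (by simp)]
  | succ m ih =>
    have h1 : 2*(m+1)+1 = (2*m+1) + 1 + 1 := by ring
    rw [h1, Finset.sum_range_succ, Finset.sum_range_succ, ih,
        Finset.sum_Icc_succ_top (by omega)]
    have h2 : g (2*m+1+1) = 0 := hg _ ⟨m+1, by ring⟩
    have h3 : 2*(m+1)-1 = 2*m+1 := by omega
    rw [h2, h3]; ring

theorem diff_inv_pow_eq_two_sum (x : ℝ) (hx : x ≠ 0) (m : ℕ) (hm : 0 < m) :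
    (1 / I) * (1 / ((x : ℂ) + I) ^ m - 1 / ((x : ℂ) - I) ^ m) =
      2 * ∑ n ∈ Finset.Icc 1 m,
        (-1 : ℂ) ^ n * (x : ℂ) ^ ((m : ℤ) - (2 * (n : ℤ) - 1)) / (1 + (x : ℂ) ^ 2) ^ m
          * (m.choose (2 * n - 1) : ℂ) := by
  have hx2 : (1 + (x:ℂ)^2) ≠ 0 := by
    have h : (0:ℝ) < 1 + x^2 := by positivity
    intro h0
    have h1 : ((1 + x^2 : ℝ) : ℂ) = 1 + (x:ℂ)^2 := by push_cast; ring
    rw [← h1] at h0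
    exact absurd (Complex.ofReal_eq_zero.mp h0) (ne_of_gt h)
  have hprod : ((x:ℂ) + I) * ((x:ℂ) - I) = 1 + (x:ℂ)^2 := by
    have := I_sq
    ring_nf
    rw [I_sq]; ring
  have ha : ((x:ℂ) + I) ≠ 0 := fun h => hx2 (by rw [← hprod, h, zero_mul])
  have hb : ((x:ℂ) - I) ≠ 0 := fun h => hx2 (by rw [← hprod, h, mul_zero])
  -- step 1: rewrite zpow terms as natural powers
  have hstep1 : ∑ n ∈ Finset.Icc 1 m,
        (-1 : ℂ) ^ n * (x : ℂ) ^ ((m : ℤ) - (2 * (n : ℤ) - 1)) / (1 + (x : ℂ) ^ 2) ^ m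
          * (m.choose (2 * n - 1) : ℂ)
      = ∑ n ∈ Finset.Icc 1 m,
        (-1 : ℂ) ^ n * (x : ℂ) ^ (m - (2 * n - 1)) / (1 + (x : ℂ) ^ 2) ^ m
          * (m.choose (2 * n - 1) : ℂ) := by
    refine Finset.sum_congr rfl fun n hn => ?_
    simp only [Finset.mem_Icc] at hn
    by_cases h : 2 * n - 1 ≤ m
    · have : (m : ℤ) - (2 * (n:ℤ) - 1) = ((m - (2*n - 1) : ℕ) : ℤ) := by
        push_cast [h]; omega
      rw [this, zpow_natCast]
    · have : m.choose (2*n-1) = 0 := Nat.choose_eq_zero_of_lt (by omega)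
      rw [this]; push_cast; ring
  rw [hstep1]
  -- key identity
  set g : ℕ → ℂ := fun j => (x:ℂ)^(m-j) * ((-I)^j - I^j) * (m.choose j : ℂ) with hg
  have hgeven : ∀ j, Even j → g j = 0 := by
    intro j hj
    simp [hg, hj.neg_pow]
  have hexp : ((x:ℂ) - I)^m - ((x:ℂ) + I)^m = ∑ j ∈ Finset.range (2*m+1), g j := by
    have e1 : ((x:ℂ) + I)^m = ∑ k ∈ Finset.range (m+1), (x:ℂ)^k * I^(m-k) * (m.choose k : ℂ) :=
      add_pow _ _ _
    have e2 : ((x:ℂ) - I)^m = ∑ k ∈ Finset.range (m+1), (x:ℂ)^k * (-I)^(m-k) * (m.choose k : ℂ) := by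
      rw [sub_eq_add_neg]; exact add_pow _ _ _
    rw [e1, e2, ← Finset.sum_sub_distrib]
    have e3 : ∑ k ∈ Finset.range (m+1),
        ((x:ℂ)^k * (-I)^(m-k) * (m.choose k : ℂ) - (x:ℂ)^k * I^(m-k) * (m.choose k : ℂ))
        = ∑ j ∈ Finset.range (m+1), g j := by
      rw [← Finset.sum_range_reflect]
      refine Finset.sum_congr rfl fun j hj => ?_
      simp only [Finset.mem_range] at hj
      have hj' : j ≤ m := by omega
      have h1 : m + 1 - 1 - j = m - j := by omega
      have h2 : m - (m - j) = j := by omega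
      rw [h1, h2, Nat.choose_symm hj', hg]
      ring
    rw [e3]
    refine Finset.sum_subset ?_ ?_
    · intro k hk; simp only [Finset.mem_range] at *; omega
    · intro k _ hk
      simp only [Finset.mem_range, not_lt] at hk
      have : m.choose k = 0 := Nat.choose_eq_zero_of_lt (by omega)
      simp [hg, this]
  have hodd : ∀ n ∈ Finset.Icc 1 m, g (2*n-1)
      = I * (2 * ((-1:ℂ)^n * (x:ℂ)^(m - (2*n-1)) * (m.choose (2*n-1) : ℂ))) := by
    intro n hn
    simp only [Finset.mem_Icc] at hn
    have h1 : 2*n-1 = 2*(n-1)+1 := by omega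
    have h2 : (-I)^(2*n-1) - I^(2*n-1) = I * (2 * (-1:ℂ)^n) := by
      rw [h1, pow_succ, pow_succ, pow_mul, pow_mul, neg_pow, I_sq]
      have h3 : n = (n-1)+1 := by omega
      rw [h3]
      simp [pow_succ]
      ring
    rw [hg]
    simp only
    rw [h2]
    ring
  have key : ((x:ℂ) - I)^m - ((x:ℂ) + I)^m
      = I * (2 * ∑ n ∈ Finset.Icc 1 m,
          (-1:ℂ)^n * (x:ℂ)^(m - (2*n-1)) * (m.choose (2*n-1) : ℂ)) := by
    rw [hexp, sum_odd_aux g hgeven m, Finset.mul_sum, Finset.mul_sum]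
    exact Finset.sum_congr rfl hodd
  -- final glue
  have hpow : ((x:ℂ) + I)^m * ((x:ℂ) - I)^m = (1 + (x:ℂ)^2)^m := by
    rw [← mul_pow, hprod]
  have hpm : (1 + (x:ℂ)^2)^m ≠ 0 := pow_ne_zero _ hx2
  have hIne : (I:ℂ) ≠ 0 := I_ne_zero
  have lhs_eq : 1 / ((x : ℂ) + I) ^ m - 1 / ((x : ℂ) - I) ^ m
      = (((x:ℂ) - I)^m - ((x:ℂ) + I)^m) / (1 + (x:ℂ)^2)^m := by
    rw [div_sub_div _ _ (pow_ne_zero _ ha) (pow_ne_zero _ hb), hpow]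
    ring_nf
  rw [lhs_eq, key]
  rw [Finset.mul_sum]
  rw [Finset.mul_sum, Finset.mul_sum]
  rw [Finset.sum_div]
  rw [Finset.mul_sum]
  refine Finset.sum_congr rfl fun n hn => ?_
  field_simp
end

section
/- For every positive integer m and every real number x, the m-th derivative of the arctangent function at x satisfies: the complex number given by (-1)^m · (m-1)! / (2i) · ( 1/(x+i)^m - 1/(x-i)^m ) is real and equals the m-th iterated derivative of arctan at x. -/
open Complex

noncomputable def G (k : ℕ) (x : ℝ) : ℂ :=
  (-1 : ℂ) ^ (k + 1) * (k.factorial : ℂ) / (2 * I)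
    * (1 / ((x : ℂ) + I) ^ (k + 1) - 1 / ((x : ℂ) - I) ^ (k + 1))

lemma hx_add (x : ℝ) : (x : ℂ) + I ≠ 0 := by
  intro h
  simpa using congrArg Complex.im h

lemma hx_sub (x : ℝ) : (x : ℂ) - I ≠ 0 := by
  intro h
  simpa using congrArg Complex.im h

lemma conj_G (k : ℕ) (x : ℝ) : (starRingEnd ℂ) (G k x) = G k x := by
  simp only [G, map_mul, map_div₀, map_sub, map_pow, map_add, map_one, map_neg,
    Complex.conj_I, Complex.conj_ofReal, map_natCast, map_ofNat]
  ring

lemma re_G (k : ℕ) (x : ℝ) : ((G k x).re : ℂ) = G k x :=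
  Complex.conj_eq_iff_re.mp (conj_G k x)

lemma pow_frac (a : ℂ) (ha : a ≠ 0) (n : ℂ) (k : ℕ) :
    -(n * a ^ k * 1) / (a ^ (k + 1)) ^ 2 = -n / a ^ (k + 2) := by
  field_simp
  ring

lemma hasDerivAt_G (k : ℕ) (x : ℝ) :
    HasDerivAt (fun y : ℝ => (G k y).re) ((G (k + 1) x).re) x := by
  have h1 : HasDerivAt (fun z : ℂ => (((z + I) ^ (k+1))⁻¹))
      (-(((k+1 : ℕ) : ℂ) * ((x : ℂ) + I) ^ k * 1) / (((x : ℂ) + I) ^ (k+1)) ^ 2) x :=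
    (((hasDerivAt_id ((x : ℝ) : ℂ)).add_const I).pow (k+1)).inv
      (pow_ne_zero _ (hx_add x))
  have h2 : HasDerivAt (fun z : ℂ => (((z - I) ^ (k+1))⁻¹))
      (-(((k+1 : ℕ) : ℂ) * ((x : ℂ) - I) ^ k * 1) / (((x : ℂ) - I) ^ (k+1)) ^ 2) x :=
    (((hasDerivAt_id ((x : ℝ) : ℂ)).sub_const I).pow (k+1)).inv
      (pow_ne_zero _ (hx_sub x))
  have h3 := ((h1.sub h2).const_mul ((-1 : ℂ) ^ (k + 1) * (k.factorial : ℂ) / (2 * I)))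
  have heq : (-1 : ℂ) ^ (k + 1) * (k.factorial : ℂ) / (2 * I) *
      (-(((k+1 : ℕ) : ℂ) * ((x : ℂ) + I) ^ k * 1) / (((x : ℂ) + I) ^ (k+1)) ^ 2
        - -(((k+1 : ℕ) : ℂ) * ((x : ℂ) - I) ^ k * 1) / (((x : ℂ) - I) ^ (k+1)) ^ 2)
      = G (k + 1) x := by
    rw [pow_frac _ (hx_add x), pow_frac _ (hx_sub x), G]
    push_cast [Nat.factorial_succ]
    ring
  rw [heq] at h3
  have h4 : HasDerivAt (fun z : ℂ => (-1 : ℂ) ^ (k + 1) * (k.factorial : ℂ) / (2 * I)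
      * (1 / (z + I) ^ (k+1) - 1 / (z - I) ^ (k+1))) (G (k+1) x) x := by
    simpa [one_div] using h3
  exact h4.real_of_complex

lemma main_aux (k : ℕ) (x : ℝ) :
    iteratedDeriv (k + 1) Real.arctan x = (G k x).re := by
  induction k generalizing x with
  | zero =>
    rw [iteratedDeriv_one, Real.deriv_arctan]
    have hfac : (1 : ℂ) + (x : ℂ) ^ 2 = ((x : ℂ) + I) * ((x : ℂ) - I) := by
      linear_combination Complex.I_sq
    have : G 0 x = ((1 / (1 + x ^ 2) : ℝ) : ℂ) := by
      rw [G]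
      push_cast
      rw [hfac]
      field_simp [hx_add x, hx_sub x]
      ring
    rw [this, Complex.ofReal_re]
  | succ k ih =>
    have hfun : iteratedDeriv (k + 1) Real.arctan = fun y => (G k y).re :=
      funext fun y => ih y
    rw [iteratedDeriv_succ, hfun]
    exact (hasDerivAt_G k x).deriv

theorem iteratedDeriv_arctan_complex_formula (m : ℕ) (hm : 0 < m) (x : ℝ) :
    (-1 : ℂ) ^ m * ((m - 1).factorial : ℂ) / (2 * I)
        * (1 / ((x : ℂ) + I) ^ m - 1 / ((x : ℂ) - I) ^ m) =
      ((iteratedDeriv m Real.arctan x : ℝ) : ℂ) := by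
  obtain ⟨k, rfl⟩ := Nat.exists_eq_succ_of_ne_zero hm.ne'
  rw [main_aux k x, re_G]
  rfl
end

section
/- For every positive integer m and every real number x with x ≠ 0 (or, more generally, for every real x, with integer powers interpreted so that 0 raised to a negative exponent is 0), the m-th iterated derivative of arctan at x equals (m-1)! · Σ_{n=1}^{m} (-1)^{m+n} · x^{m-(2n-1)} / (1+x²)^m · C(m, 2n-1). -/
open Finset Complex

private lemma sum_Icc_shift (f : ℕ → ℝ) (m : ℕ) :
    ∑ n ∈ Finset.Icc 1 m, f n = ∑ i ∈ Finset.range m, f (i+1) := by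
  induction m with
  | zero => simp
  | succ k ih => rw [Finset.sum_range_succ, ← ih, Finset.sum_Icc_succ_top (by omega)]

private lemma sum_range_double (f : ℕ → ℝ) (m : ℕ) :
    ∑ i ∈ Finset.range (2*m), f i = ∑ i ∈ Finset.range m, (f (2*i) + f (2*i+1)) := by
  induction m with
  | zero => simp
  | succ k ih =>
    have h : 2*(k+1) = (2*k)+1+1 := by ring
    rw [h, Finset.sum_range_succ, Finset.sum_range_succ, ih, Finset.sum_range_succ]
    ring

private lemma im_I_pow_even (i : ℕ) : ((Complex.I)^(2*i)).im = 0 := by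
  have : (Complex.I)^(2*i) = (((-1:ℝ)^i : ℝ) : ℂ) := by
    rw [pow_mul, Complex.I_sq]; push_cast; ring
  rw [this, Complex.ofReal_im]

private lemma im_I_pow_odd (i : ℕ) : ((Complex.I)^(2*i+1)).im = (-1:ℝ)^i := by
  have h : (Complex.I)^(2*i+1) = (((-1:ℝ)^i : ℝ) : ℂ) * Complex.I := by
    rw [pow_succ, pow_mul, Complex.I_sq]; push_cast; ring
  rw [h, Complex.im_ofReal_mul, Complex.I_im, mul_one]

private lemma im_pow_eq_sum (m : ℕ) (hm : 0 < m) (x : ℝ) :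
    (((x:ℂ) + Complex.I)^m).im
      = ∑ n ∈ Finset.Icc 1 m,
          (-1:ℝ)^(n-1) * (m.choose (2*n-1) : ℝ) * x ^ ((m:ℤ) - (2*(n:ℤ)-1)) := by
  have h1 : ((x:ℂ) + Complex.I)^m
      = ∑ k ∈ Finset.range (m+1), (x:ℂ)^k * Complex.I^(m-k) * (m.choose k : ℂ) :=
    add_pow _ _ _
  have h2 : (((x:ℂ) + Complex.I)^m).im
      = ∑ k ∈ Finset.range (m+1), x^k * (m.choose k : ℝ) * (Complex.I^(m-k)).im := by
    rw [h1, Complex.im_sum]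
    refine Finset.sum_congr rfl fun k _ => ?_
    have : (x:ℂ)^k * Complex.I^(m-k) * (m.choose k : ℂ)
        = (((x^k * (m.choose k : ℝ)) : ℝ) : ℂ) * Complex.I^(m-k) := by push_cast; ring
    rw [this, Complex.im_ofReal_mul]
  have h4 : ∑ k ∈ Finset.range (m+1), x^k * (m.choose k : ℝ) * (Complex.I^(m-k)).im
      = ∑ j ∈ Finset.range (m+1), x^(m-j) * (m.choose j : ℝ) * (Complex.I^j).im := by
    rw [← Finset.sum_range_reflect (fun j => x^(m-j) * (m.choose j : ℝ) * (Complex.I^j).im) (m+1)]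
    refine Finset.sum_congr rfl fun k hk => ?_
    rw [Finset.mem_range] at hk
    have e1 : m + 1 - 1 - k = m - k := by omega
    have e2 : m - (m - k) = k := by omega
    rw [e1, e2, Nat.choose_symm (by omega)]
  have h5 : ∑ j ∈ Finset.range (m+1), x^(m-j) * (m.choose j : ℝ) * (Complex.I^j).im
      = ∑ j ∈ Finset.range (2*m), x^(m-j) * (m.choose j : ℝ) * (Complex.I^j).im := by
    apply Finset.sum_subset
    · intro a ha; simp only [Finset.mem_range] at *; omega
    · intro a ha' ha
      have : m.choose a = 0 := Nat.choose_eq_zero_of_lt (by simp only [Finset.mem_range] at ha' ha; omega)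
      simp [this]
  rw [h2, h4, h5, sum_range_double, sum_Icc_shift]
  refine Finset.sum_congr rfl fun i hi => ?_
  rw [Finset.mem_range] at hi
  rw [im_I_pow_even, im_I_pow_odd]
  have e1 : 2*(i+1)-1 = 2*i+1 := by omega
  have e2 : (i+1)-1 = i := by omega
  rw [e1, e2]
  by_cases h : 2*i+1 ≤ m
  · have e3 : (m:ℤ) - (2*(((i:ℕ)+1 : ℕ):ℤ)-1) = ((m - (2*i+1) : ℕ) : ℤ) := by push_cast; omega
    rw [e3, zpow_natCast]
    ring
  · have : m.choose (2*i+1) = 0 := Nat.choose_eq_zero_of_lt (by omega)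
    simp [this]

private lemma iteratedDeriv_arctan_closed (m : ℕ) (x : ℝ) :
    iteratedDeriv (m+1) Real.arctan x
      = ((m.factorial : ℝ) * ((-1:ℝ)^m * (((x:ℂ)+Complex.I)^(m+1)).im)) / (1+x^2)^(m+1) := by
  induction m generalizing x with
  | zero =>
    rw [iteratedDeriv_one, Real.deriv_arctan]
    simp
  | succ k ih =>
    have hden : (0:ℝ) < 1 + x^2 := by positivity
    rw [iteratedDeriv_succ]
    have hfun : iteratedDeriv (k+1) Real.arctan
        = fun y : ℝ => ((k.factorial : ℝ) * ((-1:ℝ)^k * (((y:ℂ)+Complex.I)^(k+1)).im)) / (1+y^2)^(k+1) := by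
      funext y; exact ih y
    rw [hfun]
    have hB : HasDerivAt (fun y : ℝ => (((y:ℂ) + Complex.I)^(k+1)).im)
        ((((k:ℝ)+1)) * (((x:ℂ)+Complex.I)^k).im) x := by
      have h1 : HasDerivAt (fun z : ℂ => (z + Complex.I)^(k+1))
          (((k:ℂ)+1) * ((x:ℂ)+Complex.I)^k) x := by
        have := ((hasDerivAt_id ((x:ℂ))).add_const Complex.I).fun_pow (k+1)
        simpa using this
      have h2 := h1.comp_ofReal
      have h3 := Complex.imCLM.hasFDerivAt.comp_hasDerivAt x h2
      have he : (((k:ℂ)+1) * ((x:ℂ)+Complex.I)^k).im = ((k:ℝ)+1) * (((x:ℂ)+Complex.I)^k).im := by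
        have : ((k:ℂ)+1) = (((k:ℝ)+1 : ℝ) : ℂ) := by push_cast; ring
        rw [this, Complex.im_ofReal_mul]
      simpa [Function.comp_def, Complex.imCLM_apply, he] using h3
    have hnum : HasDerivAt (fun y : ℝ => (k.factorial : ℝ) * ((-1:ℝ)^k * (((y:ℂ)+Complex.I)^(k+1)).im))
        ((k.factorial : ℝ) * ((-1:ℝ)^k * (((k:ℝ)+1) * (((x:ℂ)+Complex.I)^k).im))) x :=
      (hB.const_mul _).const_mul _
    have hdenD : HasDerivAt (fun y : ℝ => (1+y^2)^(k+1))
        ((((k:ℝ)+1)) * (1+x^2)^k * (2*x)) x := by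
      have h1 : HasDerivAt (fun y : ℝ => 1+y^2) (2*x) x := by
        simpa using ((hasDerivAt_id x).pow 2).const_add 1
      have := h1.fun_pow (k+1)
      simpa using this
    have hd := (hnum.fun_div hdenD (by positivity)).deriv
    rw [hd]
    have hc : ((x:ℂ)+Complex.I)^k * ((((x:ℝ)^2+1 : ℝ)):ℂ)
        - 2*(x:ℂ)*((x:ℂ)+Complex.I)^(k+1) = -((x:ℂ)+Complex.I)^(k+2) := by
      push_cast
      linear_combination ((x:ℂ)+Complex.I)^k * Complex.I_sq
    have hkey : ((x:ℝ)^2+1) * (((x:ℂ)+Complex.I)^k).im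
        - 2*x*(((x:ℂ)+Complex.I)^(k+1)).im = -(((x:ℂ)+Complex.I)^(k+2)).im := by
      have h := congrArg Complex.im hc
      rw [Complex.sub_im, Complex.neg_im] at h
      rw [← h]
      have e1 : ((x:ℂ)+Complex.I)^k * ((((x:ℝ)^2+1 : ℝ)):ℂ)
          = ((((x:ℝ)^2+1 : ℝ)):ℂ) * ((x:ℂ)+Complex.I)^k := by ring
      have e2 : 2*(x:ℂ)*((x:ℂ)+Complex.I)^(k+1)
          = (((2*x : ℝ)):ℂ) * ((x:ℂ)+Complex.I)^(k+1) := by push_cast; ring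
      rw [e1, e2, Complex.im_ofReal_mul, Complex.im_ofReal_mul]
    have hfact : ((k+1).factorial : ℝ) = ((k:ℝ)+1) * (k.factorial : ℝ) := by
      rw [Nat.factorial_succ]; push_cast; ring
    rw [hfact]
    set A := (((x:ℂ)+Complex.I)^k).im with hA
    set B := (((x:ℂ)+Complex.I)^(k+1)).im with hBdef
    set C := (((x:ℂ)+Complex.I)^(k+2)).im with hC
    have hk2 : C = 2*x*B - (x^2+1)*A := by linarith [hkey]
    rw [hk2]
    field_simp
    ring

theorem iteratedDeriv_arctan_eq_sum (m : ℕ) (hm : 0 < m) (x : ℝ) (hx : x ≠ 0) :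
    iteratedDeriv m Real.arctan x =
      ((m - 1).factorial : ℝ) *
        ∑ n ∈ Finset.Icc 1 m,
          (-1 : ℝ) ^ (m + n) * x ^ ((m : ℤ) - (2 * (n : ℤ) - 1)) / (1 + x ^ 2) ^ m
            * (m.choose (2 * n - 1) : ℝ) := by
  obtain ⟨k, rfl⟩ : ∃ k, m = k + 1 := ⟨m - 1, by omega⟩
  rw [iteratedDeriv_arctan_closed, im_pow_eq_sum (k+1) (by omega) x]
  have hD : ((1:ℝ)+x^2)^(k+1) ≠ 0 := by positivity
  have hsum : ∑ n ∈ Finset.Icc 1 (k+1),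
      (-1 : ℝ) ^ (k+1+n) * x ^ (((k:ℤ)+1) - (2 * (n : ℤ) - 1)) / (1 + x ^ 2) ^ (k+1)
        * ((k+1).choose (2 * n - 1) : ℝ)
      = ∑ n ∈ Finset.Icc 1 (k+1),
        ((-1:ℝ)^k * ((-1:ℝ)^(n-1) * (((k+1).choose (2*n-1)) : ℝ)
          * x ^ (((k:ℤ)+1) - (2*(n:ℤ)-1)))) / (1 + x ^ 2) ^ (k+1) := by
    refine Finset.sum_congr rfl fun n hn => ?_
    rw [Finset.mem_Icc] at hn
    have e : k+1+n = (n-1)+(k+2) := by omega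
    rw [e, pow_add]
    have e2 : (-1:ℝ)^(k+2) = (-1:ℝ)^k := by
      rw [pow_add]; norm_num
    rw [e2]
    ring
  have ecast : ∀ n : ℕ, ((k+1 : ℕ):ℤ) - (2 * (n : ℤ) - 1) = ((k:ℤ)+1) - (2*(n:ℤ)-1) := by
    intro n; push_cast; ring
  simp only [Nat.add_sub_cancel, ecast]
  rw [hsum, ← Finset.sum_div, ← Finset.mul_sum, mul_div_assoc]
end

section
/- For every positive integer m and every real number x, the m-th iterated derivative of arctan at x equals sgn(-x)^{m-1} · (m-1)! / (1+x²)^{m/2} · sin( m · arcsin( 1/√(1+x²) ) ), where sgn(t) = 1 if t ≥ 0 and sgn(t) = -1 if t < 0. -/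
open Complex Real

/-- The signum function with `sgn 0 = 1`. -/
noncomputable def sgn (t : ℝ) : ℝ := if 0 ≤ t then 1 else -1

private lemma hne (x : ℝ) : (x : ℂ) - Complex.I ≠ 0 := by
  intro h
  have := congrArg Complex.im h
  simp at this

private lemma hasDerivAt_aux (k : ℕ) (x : ℝ) :
    HasDerivAt (fun y : ℝ => ((y : ℂ) - Complex.I)⁻¹ ^ (k + 1))
      (-(k + 1) * ((x : ℂ) - Complex.I)⁻¹ ^ (k + 2)) x := by
  have h1 : HasDerivAt (fun z : ℂ => (z - Complex.I)⁻¹ ^ (k + 1))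
      (-(k + 1) * ((x : ℂ) - Complex.I)⁻¹ ^ (k + 2)) (x : ℂ) := by
    have hz : HasDerivAt (fun z : ℂ => z - Complex.I) 1 (x : ℂ) :=
      (hasDerivAt_id _).sub_const _
    have hinv : HasDerivAt (fun z : ℂ => (z - Complex.I)⁻¹)
        (-1 / ((x : ℂ) - Complex.I) ^ 2) (x : ℂ) := by
      exact hz.inv (hne x)
    have := hinv.pow (k + 1)
    refine this.congr_deriv ?_
    simp only [Nat.add_sub_cancel]
    rw [div_eq_mul_inv, ← inv_pow]
    push_cast
    ring
  exact h1.comp_ofReal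

private lemma iter_formula (n : ℕ) :
    iteratedDeriv n (fun y : ℝ => ((y : ℂ) - Complex.I)⁻¹) =
      fun y : ℝ => (-1) ^ n * (n.factorial : ℂ) * ((y : ℂ) - Complex.I)⁻¹ ^ (n + 1) := by
  induction n with
  | zero => simp [iteratedDeriv_zero]
  | succ n ih =>
      rw [iteratedDeriv_succ, ih]
      funext y
      have h := ((hasDerivAt_aux n y).const_mul ((-1 : ℂ) ^ n * (n.factorial : ℂ)))
      rw [h.deriv]
      push_cast [Nat.factorial_succ]
      ring

private lemma iter_im (n : ℕ) :
    iteratedDeriv n (fun y : ℝ => 1 / (1 + y ^ 2)) =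
      fun y : ℝ => ((-1) ^ n * (n.factorial : ℂ) * ((y : ℂ) - Complex.I)⁻¹ ^ (n + 1)).im := by
  induction n with
  | zero =>
      funext y
      have hy : (0:ℝ) < 1 + y ^ 2 := by positivity
      simp only [iteratedDeriv_zero, pow_zero, one_mul, Nat.factorial_zero, Nat.cast_one,
        zero_add, pow_one]
      rw [Complex.inv_im]
      simp [Complex.normSq_apply]
      ring
  | succ n ih =>
      rw [iteratedDeriv_succ, ih]
      funext y
      have h := ((hasDerivAt_aux n y).const_mul ((-1 : ℂ) ^ n * (n.factorial : ℂ)))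
      have him : HasDerivAt
          (fun z : ℝ => (((-1 : ℂ)) ^ n * (n.factorial : ℂ) * ((z : ℂ) - Complex.I)⁻¹ ^ (n + 1)).im)
          (((-1 : ℂ) ^ n * (n.factorial : ℂ) * (-(n + 1) * ((y : ℂ) - Complex.I)⁻¹ ^ (n + 2))).im) y :=
        (Complex.imCLM.hasFDerivAt.comp_hasDerivAt y h)
      rw [him.deriv]
      congr 1
      push_cast [Nat.factorial_succ]
      ring

theorem iteratedDeriv_arctan_closed_form (m : ℕ) (hm : 0 < m) (x : ℝ) :
    iteratedDeriv m Real.arctan x =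
      sgn (-x) ^ (m - 1) * ((m - 1).factorial : ℝ) / (1 + x ^ 2) ^ ((m : ℝ) / 2)
        * Real.sin (m * Real.arcsin (1 / Real.sqrt (1 + x ^ 2))) := by
  obtain ⟨k, rfl⟩ : ∃ k, m = k + 1 := ⟨m - 1, (Nat.succ_pred_eq_of_pos hm).symm⟩
  simp only [Nat.add_sub_cancel]
  set r : ℝ := Real.sqrt (1 + x ^ 2) with hrdef
  set θ : ℝ := Real.arcsin (1 / r) with hθdef
  set α : ℝ := if 0 ≤ x then θ else π - θ with hαdef
  have hx1 : (0:ℝ) < 1 + x ^ 2 := by positivity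
  have hr2 : r ^ 2 = 1 + x ^ 2 := Real.sq_sqrt hx1.le
  have hrpos : 0 < r := Real.sqrt_pos.mpr hx1
  have hr1 : 1 ≤ r := by nlinarith
  have hsinθ : Real.sin θ = 1 / r := by
    rw [hθdef, Real.sin_arcsin]
    · nlinarith [one_div_pos.mpr hrpos]
    · rw [div_le_one hrpos]; exact hr1
  have hcosθ : Real.cos θ = |x| / r := by
    rw [hθdef, Real.cos_arcsin,
      show 1 - (1 / r) ^ 2 = (|x| / r) ^ 2 by
        rw [div_pow, div_pow, _root_.sq_abs]; field_simp; nlinarith]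
    exact Real.sqrt_sq (by positivity)
  have hsinα : Real.sin α = 1 / r := by
    rw [hαdef]; split
    · exact hsinθ
    · rw [Real.sin_pi_sub]; exact hsinθ
  have hcosα : Real.cos α = x / r := by
    rw [hαdef]; split
    · rw [hcosθ, _root_.abs_of_nonneg ‹_›]
    · rw [Real.cos_pi_sub, hcosθ, _root_.abs_of_neg (lt_of_not_ge ‹_›)]; ring
  -- left-hand side via the complex formula
  have hlhs : iteratedDeriv (k + 1) Real.arctan x =
      ((-1) ^ k * (k.factorial : ℂ) * ((x : ℂ) - Complex.I)⁻¹ ^ (k + 1)).im := by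
    rw [iteratedDeriv_succ', Real.deriv_arctan, iter_im k]
  -- polar form
  have hz : ((x : ℂ) - Complex.I)⁻¹ = (↑(1 / r) : ℂ) * Complex.exp (↑α * Complex.I) := by
    have hmul : ((x : ℂ) - Complex.I) * ((↑(1 / r) : ℂ) * Complex.exp (↑α * Complex.I)) = 1 := by
      rw [Complex.exp_mul_I, ← Complex.ofReal_cos, ← Complex.ofReal_sin, hsinα, hcosα]
      apply Complex.ext <;>
        simp [Complex.mul_re, Complex.mul_im] <;> field_simp <;> nlinarith [hr2]
    exact inv_eq_of_mul_eq_one_right hmul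
  have him : (((x : ℂ) - Complex.I)⁻¹ ^ (k + 1)).im =
      (1 / r) ^ (k + 1) * Real.sin (((k + 1 : ℕ) : ℝ) * α) := by
    rw [hz, mul_pow, ← Complex.exp_nat_mul, ← Complex.ofReal_pow,
      show ((k + 1 : ℕ) : ℂ) * (↑α * Complex.I) = ↑(((k + 1 : ℕ) : ℝ) * α) * Complex.I by
        push_cast; ring]
    rw [Complex.exp_mul_I, ← Complex.ofReal_cos, ← Complex.ofReal_sin]
    simp only [Complex.mul_im, Complex.add_im, Complex.add_re, Complex.ofReal_re,
      Complex.ofReal_im, Complex.mul_re, Complex.I_re, Complex.I_im]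
    ring
  have hpow : (1 + x ^ 2) ^ (((k + 1 : ℕ) : ℝ) / 2) = r ^ (k + 1) := by
    rw [show ((k + 1 : ℕ) : ℝ) / 2 = (1 / 2) * ((k + 1 : ℕ) : ℝ) by ring,
      Real.rpow_mul hx1.le, ← Real.sqrt_eq_rpow, ← hrdef, Real.rpow_natCast]
  have key : sgn (-x) ^ k * Real.sin (((k + 1 : ℕ) : ℝ) * θ) =
      (-1 : ℝ) ^ k * Real.sin (((k + 1 : ℕ) : ℝ) * α) := by
    rcases lt_trichotomy x 0 with hx0 | hx0 | hx0
    · have hs : sgn (-x) = 1 := by unfold sgn; rw [if_pos (by linarith)]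
      have hα : α = π - θ := by rw [hαdef, if_neg (not_le.mpr hx0)]
      rw [hs, hα, one_pow,
        show ((k + 1 : ℕ) : ℝ) * (π - θ) = ((k + 1 : ℕ) : ℝ) * π - ((k + 1 : ℕ) : ℝ) * θ by ring,
        Real.sin_nat_mul_pi_sub]
      ring_nf
      rw [mul_comm k 2, pow_mul]
      norm_num
    · have hr_one : r = 1 := by rw [hrdef, hx0]; simp
      have hθ1 : θ = π / 2 := by rw [hθdef, hr_one]; simp [Real.arcsin_one]
      have hα : α = θ := by rw [hαdef, if_pos (le_of_eq hx0.symm)]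
      have hs : sgn (-x) = 1 := by unfold sgn; rw [if_pos (by linarith)]
      rw [hs, hα, one_pow, hθ1]
      rcases Nat.even_or_odd k with hk | hk
      · rw [hk.neg_one_pow, one_mul]
      · obtain ⟨j, rfl⟩ := hk
        have h0 : Real.sin (((2 * j + 1 + 1 : ℕ) : ℝ) * (π / 2)) = 0 := by
          rw [show ((2 * j + 1 + 1 : ℕ) : ℝ) * (π / 2) = ((j + 1 : ℕ) : ℝ) * π by
            push_cast; ring]
          exact Real.sin_nat_mul_pi (j + 1)
        rw [h0]; ring
    · have hs : sgn (-x) = -1 := by unfold sgn; rw [if_neg (not_le.mpr (by linarith : -x < (0:ℝ)))]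
      have hα : α = θ := by rw [hαdef, if_pos hx0.le]
      rw [hs, hα]
  rw [hlhs,
    show ((-1 : ℂ)) ^ k * (k.factorial : ℂ) * ((x : ℂ) - Complex.I)⁻¹ ^ (k + 1) =
      (↑((-1 : ℝ) ^ k * (k.factorial : ℝ)) : ℂ) * ((x : ℂ) - Complex.I)⁻¹ ^ (k + 1) by
        push_cast; ring]
  rw [show ((↑((-1 : ℝ) ^ k * (k.factorial : ℝ)) : ℂ) * ((x : ℂ) - Complex.I)⁻¹ ^ (k + 1)).im
      = (-1 : ℝ) ^ k * (k.factorial : ℝ) * (((x : ℂ) - Complex.I)⁻¹ ^ (k + 1)).im by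
        simp only [Complex.mul_im, Complex.ofReal_re, Complex.ofReal_im]
        ring]
  rw [him, hpow]
  rw [show sgn (-x) ^ k * (k.factorial : ℝ) / r ^ (k + 1) *
        Real.sin (((k + 1 : ℕ) : ℝ) * θ) =
      (sgn (-x) ^ k * Real.sin (((k + 1 : ℕ) : ℝ) * θ)) * ((k.factorial : ℝ) / r ^ (k + 1)) by
        ring, key]
  field_simp
  rw [mul_right_comm, ← mul_pow, one_div_mul_cancel hrpos.ne', one_pow, one_mul]
end

section
/- For every nonzero real number x, arctan(x) equals i times the sum of the convergent series Σ_{m=1}^{∞} (1/(2m-1)) · ( 1/(1+2i/x)^{2m-1} - 1/(1-2i/x)^{2m-1} ); more precisely, this complex sum multiplied by i is real and equals arctan(x). -/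
open Complex

/-- arg of a complex number with positive real part. -/
lemma my_arg_of_re_pos {z : ℂ} (h : 0 < z.re) : z.arg = Real.arctan (z.im / z.re) := by
  rw [← Complex.tan_arg, Real.arctan_tan]
  · exact Complex.neg_pi_div_two_lt_arg_iff.mpr (Or.inl h)
  · exact Complex.arg_lt_pi_div_two_iff.mpr (Or.inl h)

/-- The artanh series. -/
lemma my_hasSum_atanh {z : ℂ} (hz : ‖z‖ < 1) :
    HasSum (fun m : ℕ => z ^ (2 * m + 1) / (↑(2 * m + 1) : ℂ))
      ((Complex.log (1 + z) - Complex.log (1 - z)) / 2) := by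
  have h1 := Complex.hasSum_taylorSeries_neg_log hz
  have h2 := Complex.hasSum_taylorSeries_neg_log (z := -z) (by simpa)
  have h := (h1.sub h2).div_const 2
  have hval : (-Complex.log (1 - z) - -Complex.log (1 - -z)) / 2
      = (Complex.log (1 + z) - Complex.log (1 - z)) / 2 := by
    rw [sub_neg_eq_add]; ring
  rw [hval] at h
  have hinj : Function.Injective (fun m : ℕ => 2 * m + 1) := by
    intro a b hab; dsimp at hab; omega
  have hvan : ∀ n : ℕ, n ∉ Set.range (fun m : ℕ => 2 * m + 1) →
      (z ^ n / n - (-z) ^ n / n) / 2 = 0 := by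
    intro n hn
    rcases Nat.even_or_odd n with he | ho
    · rw [he.neg_pow]; ring
    · exact absurd (by obtain ⟨k, hk⟩ := ho; exact ⟨k, by dsimp; omega⟩) hn
  have h' := (Function.Injective.hasSum_iff hinj hvan).mpr h
  convert h' using 2 with m
  have hodd : Odd (2 * m + 1) := ⟨m, by ring⟩
  rw [Function.comp_apply]
  rw [hodd.neg_pow]
  ring

lemma my_re (a b : ℝ) : ((a:ℂ) + (b:ℂ) * I).re = a := by simp

lemma my_im (a b : ℝ) : ((a:ℂ) + (b:ℂ) * I).im = b := by simp

theorem arctan_eq_i_mul_tsum (x : ℝ) (hx : x ≠ 0) :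
    (Summable fun m : ℕ =>
      (1 / (2 * ((m : ℂ) + 1) - 1)) *
        (1 / (1 + 2 * I / (x : ℂ)) ^ (2 * (m + 1) - 1)
          - 1 / (1 - 2 * I / (x : ℂ)) ^ (2 * (m + 1) - 1))) ∧
    I * (∑' m : ℕ,
      (1 / (2 * ((m : ℂ) + 1) - 1)) *
        (1 / (1 + 2 * I / (x : ℂ)) ^ (2 * (m + 1) - 1)
          - 1 / (1 - 2 * I / (x : ℂ)) ^ (2 * (m + 1) - 1))) =
      ((Real.arctan x : ℝ) : ℂ) := by
  have hxC : (x : ℂ) ≠ 0 := Complex.ofReal_ne_zero.mpr hx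
  set z : ℂ := 1 / (1 + 2 * I / (x : ℂ)) with hz_def
  set w : ℂ := 1 / (1 - 2 * I / (x : ℂ)) with hw_def
  have hd : (x : ℝ) ^ 2 + 4 ≠ 0 := by positivity
  have hdpos : (0:ℝ) < x ^ 2 + 4 := by positivity
  -- explicit form of z and w
  have hne1 : (1:ℂ) + 2 * I / (x:ℂ) ≠ 0 := by
    have he : (1:ℂ) + 2 * I / (x:ℂ) = ((x:ℂ) + 2 * I) / x := by field_simp
    rw [he]
    refine div_ne_zero ?_ hxC
    intro h; have := congrArg Complex.im h; simp at this
  have hne2 : (1:ℂ) - 2 * I / (x:ℂ) ≠ 0 := by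
    have he : (1:ℂ) - 2 * I / (x:ℂ) = ((x:ℂ) - 2 * I) / x := by field_simp
    rw [he]
    refine div_ne_zero ?_ hxC
    intro h; have := congrArg Complex.im h; simp at this
  have hz_eq : z = ((x ^ 2 / (x ^ 2 + 4) : ℝ) : ℂ) + ((-(2 * x) / (x ^ 2 + 4) : ℝ) : ℂ) * I := by
    rw [hz_def, div_eq_iff hne1]
    have h4 : (x:ℂ) * 4 + (x:ℂ) ^ 3 ≠ 0 := by
      have he : (x:ℂ) * 4 + (x:ℂ) ^ 3 = x * (((4 + x^2 : ℝ) : ℂ)) := by push_cast; ring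
      rw [he]
      exact mul_ne_zero hxC (Complex.ofReal_ne_zero.mpr (by positivity))
    push_cast
    field_simp
    ring_nf
    rw [Complex.I_sq]
    have h4c : (4:ℂ) + (x:ℂ) ^ 2 ≠ 0 := by norm_cast; positivity
    field_simp
    ring
  have hw_eq : w = ((x ^ 2 / (x ^ 2 + 4) : ℝ) : ℂ) + (((2 * x) / (x ^ 2 + 4) : ℝ) : ℂ) * I := by
    rw [hw_def, div_eq_iff hne2]
    have h4 : (x:ℂ) * 4 + (x:ℂ) ^ 3 ≠ 0 := by
      have he : (x:ℂ) * 4 + (x:ℂ) ^ 3 = x * (((4 + x^2 : ℝ) : ℂ)) := by push_cast; ring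
      rw [he]
      exact mul_ne_zero hxC (Complex.ofReal_ne_zero.mpr (by positivity))
    push_cast
    field_simp
    ring_nf
    rw [Complex.I_sq]
    have h4c : (4:ℂ) + (x:ℂ) ^ 2 ≠ 0 := by norm_cast; positivity
    field_simp
    ring
  -- norms < 1
  have hnz : ‖z‖ < 1 := by
    have h2 : ‖z‖ ^ 2 < 1 := by
      rw [Complex.sq_norm, hz_eq, Complex.normSq_add_mul_I]
      rw [div_pow, div_pow, ← add_div, div_lt_one (by positivity)]
      nlinarith [sq_nonneg x]
    nlinarith [norm_nonneg z]
  have hnw : ‖w‖ < 1 := by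
    have h2 : ‖w‖ ^ 2 < 1 := by
      rw [Complex.sq_norm, hw_eq, Complex.normSq_add_mul_I]
      rw [div_pow, div_pow, ← add_div, div_lt_one (by positivity)]
      nlinarith [sq_nonneg x]
    nlinarith [norm_nonneg w]
  have hsz := my_hasSum_atanh hnz
  have hsw := my_hasSum_atanh hnw
  have hsum := hsz.sub hsw
  -- identify the terms
  have hfun : (fun m : ℕ =>
      (1 / (2 * ((m : ℂ) + 1) - 1)) *
        (1 / (1 + 2 * I / (x : ℂ)) ^ (2 * (m + 1) - 1)
          - 1 / (1 - 2 * I / (x : ℂ)) ^ (2 * (m + 1) - 1)))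
      = fun m : ℕ => z ^ (2 * m + 1) / (↑(2 * m + 1) : ℂ)
          - w ^ (2 * m + 1) / (↑(2 * m + 1) : ℂ) := by
    funext m
    have he : 2 * (m + 1) - 1 = 2 * m + 1 := by omega
    rw [he, ← one_div_pow, ← one_div_pow, ← hz_def, ← hw_def]
    have hc : ((2 * m + 1 : ℕ) : ℂ) = 2 * ((m : ℂ) + 1) - 1 := by push_cast; ring
    rw [hc]; ring
  constructor
  · rw [hfun]; exact hsum.summable
  · rw [hfun, hsum.tsum_eq]
    -- now evaluate the closed form
    have hw_conj : w = (starRingEnd ℂ) z := by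
      rw [hz_eq, hw_eq]
      simp only [map_add, map_mul, Complex.conj_ofReal, Complex.conj_I]
      push_cast
      ring
    have hre1 : 0 < (1 + z).re := by
      rw [hz_eq, Complex.add_re, Complex.one_re, my_re]; positivity
    have hre2 : 0 < (1 - z).re := by
      rw [hz_eq, Complex.sub_re, Complex.one_re, my_re, sub_pos, div_lt_one hdpos]
      nlinarith
    have harg1 : (1 + z).arg ≠ Real.pi := by
      intro h; exact absurd (Complex.arg_eq_pi_iff.mp h).1 (by linarith)
    have harg2 : (1 - z).arg ≠ Real.pi := by
      intro h; exact absurd (Complex.arg_eq_pi_iff.mp h).1 (by linarith)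
    have hM1 : Complex.log (1 + w) = (starRingEnd ℂ) (Complex.log (1 + z)) := by
      rw [hw_conj, show (1 : ℂ) + (starRingEnd ℂ) z = (starRingEnd ℂ) (1 + z) by
        simp [map_add], Complex.log_conj _ harg1]
    have hM2 : Complex.log (1 - w) = (starRingEnd ℂ) (Complex.log (1 - z)) := by
      rw [hw_conj, show (1 : ℂ) - (starRingEnd ℂ) z = (starRingEnd ℂ) (1 - z) by
        simp [map_sub], Complex.log_conj _ harg2]
    have e1 := Complex.sub_conj (Complex.log (1 + z))
    have e2 := Complex.sub_conj (Complex.log (1 - z))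
    push_cast at e1 e2
    have him : I * ((Complex.log (1 + z) - Complex.log (1 - z)) / 2
        - (Complex.log (1 + w) - Complex.log (1 - w)) / 2)
        = (((Complex.log (1 - z)).im - (Complex.log (1 + z)).im : ℝ) : ℂ) := by
      rw [hM1, hM2]
      push_cast
      linear_combination (I / 2) * e1 - (I / 2) * e2
        + ((((Complex.log (1 + z)).im : ℝ) : ℂ) - (((Complex.log (1 - z)).im : ℝ) : ℂ))
          * Complex.I_sq
    rw [him]
    norm_cast
    rw [Complex.log_im, Complex.log_im]
    -- compute the two arguments
    have hre1' : (1 + z).re = 1 + x ^ 2 / (x ^ 2 + 4) := by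
      rw [hz_eq, Complex.add_re, Complex.one_re, my_re]
    have him1 : (1 + z).im = -(2 * x) / (x ^ 2 + 4) := by
      rw [hz_eq, Complex.add_im, Complex.one_im, my_im, zero_add]
    have hre2' : (1 - z).re = 1 - x ^ 2 / (x ^ 2 + 4) := by
      rw [hz_eq, Complex.sub_re, Complex.one_re, my_re]
    have him2 : (1 - z).im = 2 * x / (x ^ 2 + 4) := by
      rw [hz_eq, Complex.sub_im, Complex.one_im, my_im, zero_sub, neg_div, neg_neg]
    have hd2 : (0:ℝ) < x ^ 2 + 2 := by positivity
    have ha1 : (1 + z).arg = -Real.arctan (x / (x ^ 2 + 2)) := by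
      rw [my_arg_of_re_pos hre1, him1, hre1']
      rw [show -(2 * x) / (x ^ 2 + 4) / (1 + x ^ 2 / (x ^ 2 + 4)) = -(x / (x ^ 2 + 2)) by
        field_simp; ring]
      exact Real.arctan_neg _
    have ha2 : (1 - z).arg = Real.arctan (x / 2) := by
      rw [my_arg_of_re_pos hre2, him2, hre2']
      congr 1
      field_simp
      ring
    rw [ha1, ha2]
    have hlt : (x / 2) * (x / (x ^ 2 + 2)) < 1 := by
      rw [div_mul_div_comm, div_lt_one (by positivity)]
      nlinarith
    rw [sub_neg_eq_add, Real.arctan_add hlt]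
    congr 1
    have h4' : (4 : ℝ) + x ^ 2 ≠ 0 := by positivity
    field_simp
    linear_combination mul_inv_cancel₀ h4'
end

section
/- For every real number x, the double series Σ_{m=1}^{∞} Σ_{n=1}^{2m-1} (-1)^n / ( (2m-1) · (1+x²/4)^{2m-1} ) · (x/2)^{2(2m-n)-1} · C(2m-1, 2n-1) of real numbers is summable in m (each inner sum over n being a finite sum). -/
open Finset Complex

lemma I_pow_even_im {e : ℕ} (he : Even e) : (Complex.I ^ e).im = 0 := by
  obtain ⟨c, rfl⟩ := he
  rw [show c + c = 2 * c by ring, pow_mul, Complex.I_sq]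
  rw [show ((-1 : ℂ)) ^ c = (((-1 : ℝ) ^ c : ℝ) : ℂ) by push_cast; ring]
  exact Complex.ofReal_im _

lemma pow_im (t : ℝ) (m : ℕ) :
    ((((t : ℂ) * ((t : ℂ) + Complex.I)) ^ (2 * m + 1)).im)
      = ∑ j ∈ Finset.range (m + 1),
          (-1 : ℝ) ^ (m - j) * t ^ (2 * m + 1 + 2 * j) * ((2 * m + 1).choose (2 * j)) := by
  set N := 2 * m + 1 with hN
  have hpow : ((t : ℂ) * ((t : ℂ) + Complex.I)) ^ N
      = ∑ k ∈ Finset.range (N + 1),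
          ((t ^ (N + k) * ((N.choose k : ℝ)) : ℝ) : ℂ) * Complex.I ^ (N - k) := by
    rw [mul_pow, (Commute.all (t : ℂ) Complex.I).add_pow, Finset.mul_sum]
    refine Finset.sum_congr rfl fun k hk => ?_
    push_cast
    ring
  rw [hpow, Complex.im_sum]
  have hterm : ∀ k ∈ Finset.range (N + 1),
      (((t ^ (N + k) * ((N.choose k : ℝ)) : ℝ) : ℂ) * Complex.I ^ (N - k)).im
        = t ^ (N + k) * (N.choose k : ℝ) * (Complex.I ^ (N - k)).im := fun k _ =>
    Complex.im_ofReal_mul _ _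
  rw [Finset.sum_congr rfl hterm]
  -- kill odd k, reindex even k = 2j
  rw [← Finset.sum_filter_add_sum_filter_not (Finset.range (N + 1)) (fun k => Even k)]
  have hodd : ∑ k ∈ (Finset.range (N + 1)).filter (fun k => ¬ Even k),
      t ^ (N + k) * (N.choose k : ℝ) * (Complex.I ^ (N - k)).im = 0 := by
    refine Finset.sum_eq_zero fun k hk => ?_
    simp only [Finset.mem_filter, Finset.mem_range] at hk
    have hkodd : Odd k := Nat.odd_iff.2 (Nat.not_even_iff.1 hk.2)
    have hkle : k ≤ N := by omega
    have heven : Even (N - k) := Nat.Odd.sub_odd (Nat.odd_iff.2 (by omega)) hkodd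
    rw [I_pow_even_im heven, mul_zero]
  rw [hodd, add_zero]
  refine Finset.sum_nbij' (fun k => k / 2) (fun j => 2 * j) ?_ ?_ ?_ ?_ ?_
  · intro k hk
    simp only [Finset.mem_filter, Finset.mem_range] at hk ⊢
    obtain ⟨c, rfl⟩ := hk.2
    omega
  · intro j hj
    simp only [Finset.mem_filter, Finset.mem_range] at hj ⊢
    exact ⟨by omega, ⟨j, by ring⟩⟩
  · intro k hk
    simp only [Finset.mem_filter, Finset.mem_range] at hk
    obtain ⟨c, rfl⟩ := hk.2
    omega
  · intro j _; omega
  · intro k hk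
    simp only [Finset.mem_filter, Finset.mem_range] at hk
    obtain ⟨c, hc⟩ := hk.2
    have hkc : k = 2 * c := by omega
    subst hkc
    have hcm : c ≤ m := by omega
    have h1 : 2 * c / 2 = c := by omega
    have h2 : N - 2 * c = 2 * (m - c) + 1 := by omega
    rw [h1, h2, pow_succ, pow_mul, Complex.I_sq]
    rw [show ((-1 : ℂ)) ^ (m - c) * Complex.I
        = (((-1 : ℝ) ^ (m - c) : ℝ) : ℂ) * Complex.I by push_cast; ring]
    rw [Complex.im_ofReal_mul, Complex.I_im, mul_one]
    ring

lemma S_eq (t : ℝ) (m : ℕ) :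
    ∑ n ∈ Finset.Icc 1 (2 * m + 1),
        (-1 : ℝ) ^ n * t ^ (2 * (2 * m + 2 - n) - 1) * ((2 * m + 1).choose (2 * n - 1))
      = - ((((t : ℂ) * ((t : ℂ) + Complex.I)) ^ (2 * m + 1)).im) := by
  rw [pow_im, ← Finset.sum_neg_distrib]
  have hsub : Finset.Icc 1 (m + 1) ⊆ Finset.Icc 1 (2 * m + 1) := by
    apply Finset.Icc_subset_Icc le_rfl; omega
  rw [← Finset.sum_subset hsub (by
    intro n hn hn'
    simp only [Finset.mem_Icc] at hn hn'
    have : 2 * m + 1 < 2 * n - 1 := by omega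
    rw [Nat.choose_eq_zero_of_lt this]
    simp)]
  rw [show Finset.Icc 1 (m+1) = Finset.Ico 1 (m+2) by exact (Finset.Ico_add_one_right_eq_Icc 1 (m+1)).symm,
    Finset.sum_Ico_eq_sum_range]
  have hm2 : m + 2 - 1 = m + 1 := by omega
  rw [hm2, ← Finset.sum_range_reflect]
  refine Finset.sum_congr rfl fun j hj => ?_
  simp only [Finset.mem_range] at hj
  have hjm : j ≤ m := by omega
  have h1 : 1 + (m + 1 - 1 - j) = m + 1 - j := by omega
  rw [h1]
  have h2 : 2 * (m + 1 - j) - 1 = (2 * m + 1) - 2 * j := by omega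
  have h3 : (2 * m + 1).choose ((2 * m + 1) - 2 * j) = (2 * m + 1).choose (2 * j) :=
    Nat.choose_symm (by omega)
  have h4 : 2 * (2 * m + 2 - (m + 1 - j)) - 1 = 2 * m + 1 + 2 * j := by omega
  have h5 : (-1 : ℝ) ^ (m + 1 - j) = -(-1 : ℝ) ^ (m - j) := by
    rw [show m + 1 - j = (m - j) + 1 by omega, pow_succ]; ring
  rw [h2, h3, h4, h5]
  ring


theorem summable_arctan_double_series (x : ℝ) :
    Summable fun m : ℕ =>
      ∑ n ∈ Finset.Icc 1 (2 * (m + 1) - 1),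
        (-1 : ℝ) ^ n / ((2 * ((m : ℝ) + 1) - 1) * (1 + x ^ 2 / 4) ^ (2 * (m + 1) - 1))
          * (x / 2) ^ (2 * (2 * (m + 1) - n) - 1) * ((2 * (m + 1) - 1).choose (2 * n - 1) : ℝ) := by
  set t : ℝ := x / 2 with ht
  have hpos : (0 : ℝ) < 1 + t ^ 2 := by positivity
  set s : ℝ := Real.sqrt (1 + t ^ 2) with hs
  have hs2 : s ^ 2 = 1 + t ^ 2 := Real.sq_sqrt hpos.le
  have hspos : 0 < s := Real.sqrt_pos.2 hpos
  have hts : |t| ≤ s := by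
    rw [hs, ← Real.sqrt_sq (abs_nonneg t)]
    exact Real.sqrt_le_sqrt (by rw [_root_.sq_abs]; linarith)
  set a : ℝ := t ^ 2 / (1 + t ^ 2) with ha
  have ha0 : 0 ≤ a := by positivity
  have ha1 : a < 1 := by rw [ha, div_lt_one hpos]; linarith
  set b : ℝ := |t| / s with hb
  have hb0 : 0 ≤ b := by positivity
  have hb1 : b ≤ 1 := by rw [hb, div_le_one hspos]; exact hts
  have hb2 : b ^ 2 = a := by rw [hb, div_pow, _root_.sq_abs, hs2]
  apply Summable.of_norm_bounded (summable_geometric_of_lt_one ha0 ha1)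
  intro m
  have hx : 1 + x ^ 2 / 4 = 1 + t ^ 2 := by rw [ht]; ring
  have hN : 2 * (m + 1) - 1 = 2 * m + 1 := by omega
  have he : ∀ n : ℕ, 2 * (2 * (m + 1) - n) - 1 = 2 * (2 * m + 2 - n) - 1 := fun n => by omega
  simp only [hN, hx, he]
  set D : ℝ := (2 * ((m : ℝ) + 1) - 1) * (1 + t ^ 2) ^ (2 * m + 1) with hD
  have hc1 : (1 : ℝ) ≤ 2 * ((m : ℝ) + 1) - 1 := by
    linarith [Nat.cast_nonneg (α := ℝ) m]
  have hDpos : 0 < D := by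
    rw [hD]
    exact mul_pos (by linarith) (pow_pos hpos _)
  have hfm : ∑ n ∈ Finset.Icc 1 (2 * m + 1),
      (-1 : ℝ) ^ n / D * t ^ (2 * (2 * m + 2 - n) - 1) * ((2 * m + 1).choose (2 * n - 1) : ℝ)
      = (∑ n ∈ Finset.Icc 1 (2 * m + 1),
          (-1 : ℝ) ^ n * t ^ (2 * (2 * m + 2 - n) - 1) * ((2 * m + 1).choose (2 * n - 1) : ℝ)) / D := by
    rw [Finset.sum_div]
    exact Finset.sum_congr rfl fun n _ => by ring
  rw [hfm, S_eq]
  have hns : Complex.normSq ((t : ℂ) + Complex.I) = 1 + t ^ 2 := by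
    simp [Complex.normSq_apply]; ring
  have habsI : ‖((t : ℂ) + Complex.I)‖ = s := by
    rw [Complex.norm_def, hns, hs]
  have habs : |((((t : ℂ) * ((t : ℂ) + Complex.I)) ^ (2 * m + 1)).im)|
      ≤ (|t| * s) ^ (2 * m + 1) := by
    calc |((((t : ℂ) * ((t : ℂ) + Complex.I)) ^ (2 * m + 1)).im)|
        ≤ ‖(((t : ℂ) * ((t : ℂ) + Complex.I)) ^ (2 * m + 1))‖ :=
          Complex.abs_im_le_norm _
      _ = (|t| * s) ^ (2 * m + 1) := by
          rw [norm_pow, norm_mul, Complex.norm_real, Real.norm_eq_abs, habsI]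
  have hDge : (1 + t ^ 2) ^ (2 * m + 1) ≤ D := by
    rw [hD]
    exact le_mul_of_one_le_left (pow_nonneg hpos.le _) hc1
  calc ‖-((((t : ℂ) * ((t : ℂ) + Complex.I)) ^ (2 * m + 1)).im) / D‖
      = |((((t : ℂ) * ((t : ℂ) + Complex.I)) ^ (2 * m + 1)).im)| / D := by
        rw [Real.norm_eq_abs, abs_div, abs_neg, abs_of_pos hDpos]
    _ ≤ (|t| * s) ^ (2 * m + 1) / (1 + t ^ 2) ^ (2 * m + 1) :=
        div_le_div₀ (by positivity) habs (pow_pos hpos _) hDge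
    _ = b ^ (2 * m + 1) := by
        rw [← div_pow, hb]
        congr 1
        rw [← hs2, sq, mul_div_mul_right _ _ hspos.ne']
    _ ≤ b ^ (2 * m) := pow_le_pow_of_le_one hb0 hb1 (by omega)
    _ = a ^ m := by rw [pow_mul, hb2]
end

section
/- For every nonzero real number x, the partial sums i · Σ_{m=1}^{⌊M/2⌋+1} (1/(2m-1)) · ( 1/(1+2i/x)^{2m-1} - 1/(1-2i/x)^{2m-1} ) converge, as M → ∞, to arctan(x) (regarded as a complex number). -/
open Complex Filter Finset

theorem partial_sums_tendsto_arctan (x : ℝ) (hx : x ≠ 0) :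
    Tendsto (fun M : ℕ =>
        I * ∑ m ∈ Finset.Icc 1 (M / 2 + 1),
          (1 / (2 * (m : ℂ) - 1)) *
            (1 / (1 + 2 * I / (x : ℂ)) ^ (2 * m - 1)
              - 1 / (1 - 2 * I / (x : ℂ)) ^ (2 * m - 1)))
      atTop (nhds ((Real.arctan x : ℝ) : ℂ)) := by
  have hx' : (x:ℂ) ≠ 0 := ofReal_ne_zero.mpr hx
  have e1 : 1 + 2*I/(x:ℂ) = ((1:ℝ):ℂ) + ((2/x : ℝ):ℂ)*I := by push_cast; ring
  have e2 : 1 - 2*I/(x:ℂ) = ((1:ℝ):ℂ) + ((-2/x : ℝ):ℂ)*I := by push_cast; ring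
  have hxI : ((x:ℂ) + I) ≠ 0 := by
    intro h; simpa using congrArg Complex.im h
  have hxI' : ((x:ℂ) - I) ≠ 0 := by
    intro h; simpa using congrArg Complex.im h
  have hx2 : ((x:ℂ)^2 + 1) ≠ 0 := by
    have : ((x:ℂ)^2+1) = ((x^2+1 : ℝ) : ℂ) := by push_cast; ring
    rw [this]; exact_mod_cast ofReal_ne_zero.mpr (by positivity)
  set w : ℂ := 1 / (1 + 2*I/(x:ℂ)) with hw
  set v : ℂ := 1 / (1 - 2*I/(x:ℂ)) with hv
  have habs : ∀ c : ℝ, c ≠ 0 → 1 < ‖((1:ℝ):ℂ) + ((c : ℝ):ℂ)*I‖ := by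
    intro c hc
    rw [Complex.norm_def]
    have : Complex.normSq (((1:ℝ):ℂ) + ((c : ℝ):ℂ)*I) = 1 + c^2 := by
      rw [normSq_add_mul_I]; norm_num
    rw [this]
    nlinarith [Real.sq_sqrt (by positivity : (0:ℝ) ≤ 1 + c^2), Real.sqrt_nonneg (1 + c^2),
      sq_pos_of_ne_zero hc]
  have habs1 : 1 < ‖1 + 2*I/(x:ℂ)‖ := by rw [e1]; exact habs _ (by positivity)
  have habs2 : 1 < ‖1 - 2*I/(x:ℂ)‖ := by
    rw [e2]; exact habs _ (div_ne_zero (by norm_num) hx)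
  have hb1 : ‖I*w‖ < 1 := by
    rw [norm_mul, Complex.norm_I, one_mul, hw, norm_div, norm_one,
      div_lt_one (lt_trans one_pos habs1)]
    exact habs1
  have hb2 : ‖I*v‖ < 1 := by
    rw [norm_mul, Complex.norm_I, one_mul, hv, norm_div, norm_one,
      div_lt_one (lt_trans one_pos habs2)]
    exact habs2
  have hd1b : ((x:ℂ) + 2*I) ≠ 0 := by intro h; simpa using congrArg Complex.im h
  have hd2b : ((x:ℂ) - 2*I) ≠ 0 := by intro h; simpa using congrArg Complex.im h
  have hI2 : Complex.I * (x:ℂ) * Complex.I = -(x:ℂ) := by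
    rw [mul_comm Complex.I (x:ℂ), mul_assoc, I_mul_I, mul_neg_one]
  have hA : (1 + (I*w)*I)/(1 - (I*w)*I) = (1 + (x:ℂ)*I)/((x:ℂ)^2+1) := by
    rw [hw]
    field_simp [hd1b]
    have h2 : (x:ℂ) + I*2 ≠ 0 := by rw [mul_comm]; exact hd1b
    rw [I_sq, div_eq_iff (by rw [neg_one_mul, show (1:ℂ) - -x/(x+I*2) = 2*(x+I)/(x+I*2) by field_simp; ring]; exact div_ne_zero (mul_ne_zero two_ne_zero hxI) h2)]
    field_simp
    linear_combination (-2*(x:ℂ)) * Complex.I_sq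
  have hB : (1 + (I*v)*I)/(1 - (I*v)*I) = (1 - (x:ℂ)*I)/((x:ℂ)^2+1) := by
    rw [hv]
    field_simp [hd2b]
    have h2 : (x:ℂ) - I*2 ≠ 0 := by rw [mul_comm]; exact hd2b
    rw [I_sq, div_eq_iff (by rw [neg_one_mul, show (1:ℂ) - -x/(x-I*2) = 2*(x-I)/(x-I*2) by field_simp; ring]; exact div_ne_zero (mul_ne_zero two_ne_zero hxI') h2)]
    field_simp
    linear_combination (-2*(x:ℂ)) * Complex.I_sq
  have hu : (1 + (x:ℂ)*I) ≠ 0 := by intro h; simpa using congrArg Complex.re h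
  have hu' : (1 - (x:ℂ)*I) ≠ 0 := by intro h; simpa using congrArg Complex.re h
  have hr : (0:ℝ) < 1/(x^2+1) := by positivity
  have hsplit1 : (1 + (x:ℂ)*I)/((x:ℂ)^2+1)
      = ((1/(x^2+1) : ℝ) : ℂ) * (1 + (x:ℂ)*I) := by push_cast; field_simp
  have hsplit2 : (1 - (x:ℂ)*I)/((x:ℂ)^2+1)
      = ((1/(x^2+1) : ℝ) : ℂ) * (1 - (x:ℂ)*I) := by push_cast; field_simp
  have hconj : (starRingEnd ℂ) (1 + (x:ℂ)*I) = 1 - (x:ℂ)*I := by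
    rw [map_add, map_one, map_mul, conj_ofReal, conj_I]; ring
  have hargne : (1 + (x:ℂ)*I).arg ≠ Real.pi := by
    intro h
    have := (Complex.arg_eq_pi_iff.mp h).1
    norm_num at this
  have habs' : ‖1 + (x:ℂ)*I‖ = Real.sqrt (1 + x^2) := by
    rw [show (1 + (x:ℂ)*I) = ((1:ℝ):ℂ) + (x:ℂ)*I from by norm_num, Complex.norm_def,
      normSq_add_mul_I]
    norm_num
  have harg : (1 + (x:ℂ)*I).arg = Real.arctan x := by
    rw [Complex.arg_of_re_nonneg (by simp), habs', Real.arctan_eq_arcsin]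
    norm_num
  have hval : Complex.arctan (I*w) - Complex.arctan (I*v) = ((Real.arctan x : ℝ) : ℂ) := by
    rw [Complex.arctan, Complex.arctan, hA, hB, hsplit1, hsplit2,
      Complex.log_ofReal_mul hr hu, Complex.log_ofReal_mul hr hu',
      ← hconj, Complex.log_conj _ hargne]
    rw [show ∀ r u c : ℂ, -I/2 * (r + u) - -I/2*(r + c) = -I/2 * (u - c) from
      fun r u c => by ring, Complex.sub_conj, Complex.log_im, harg]
    simp only [Complex.ofReal_mul, Complex.ofReal_ofNat]
    linear_combination (-((Real.arctan x : ℝ):ℂ)) * Complex.I_sq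
  have H := (Complex.hasSum_arctan hb1).sub (Complex.hasSum_arctan hb2)
  rw [hval] at H
  have H' : HasSum (fun n : ℕ =>
      I * ((1 / (2 * (((n+1:ℕ)) : ℂ) - 1)) *
        (1 / (1 + 2 * I / (x : ℂ)) ^ (2 * (n+1) - 1)
          - 1 / (1 - 2 * I / (x : ℂ)) ^ (2 * (n+1) - 1)))) ((Real.arctan x :ℝ):ℂ) := by
    have heq : (fun n : ℕ =>
        I * ((1 / (2 * (((n+1:ℕ)) : ℂ) - 1)) *
          (1 / (1 + 2 * I / (x : ℂ)) ^ (2 * (n+1) - 1)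
            - 1 / (1 - 2 * I / (x : ℂ)) ^ (2 * (n+1) - 1))))
        = fun n : ℕ => (-1)^n * (I*w)^(2*n+1)/((2*n+1 : ℕ) : ℂ)
            - (-1)^n * (I*v)^(2*n+1)/((2*n+1 : ℕ) : ℂ) := by
      funext n
      have hnn : 2*(n+1)-1 = 2*n+1 := by omega
      have hcast : 2 * (((n+1:ℕ)) : ℂ) - 1 = ((2*n+1 : ℕ) : ℂ) := by push_cast; ring
      have ht : ((-1:ℂ))^n * (-1)^n = 1 := by
        rw [← pow_add]; exact Even.neg_one_pow ⟨n, by ring⟩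
      have hpow : ∀ z : ℂ, (I*z)^(2*n+1) = (-1)^n * I * z^(2*n+1) := fun z => by
        rw [mul_pow, show I^(2*n+1) = (-1)^n * I from by rw [pow_succ, pow_mul, I_sq]]
      have hpw : 1/(1 + 2*I/(x:ℂ))^(2*n+1) = w^(2*n+1) := by rw [hw, one_div_pow]
      have hpv : 1/(1 - 2*I/(x:ℂ))^(2*n+1) = v^(2*n+1) := by rw [hv, one_div_pow]
      rw [hnn, hcast, hpow, hpow, hpw, hpv]
      linear_combination (-(I*(w^(2*n+1) - v^(2*n+1)))/((2*n+1:ℕ):ℂ)) * ht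
    rw [heq]
    exact H
  have key : Tendsto (fun N : ℕ => I * ∑ m ∈ Finset.Icc 1 N,
      (1 / (2 * (m : ℂ) - 1)) *
        (1 / (1 + 2 * I / (x : ℂ)) ^ (2 * m - 1)
          - 1 / (1 - 2 * I / (x : ℂ)) ^ (2 * m - 1))) atTop
      (nhds ((Real.arctan x : ℝ) : ℂ)) := by
    have h2 := H'.tendsto_sum_nat
    refine h2.congr fun N => ?_
    rw [Finset.mul_sum, ← Finset.Ico_add_one_right_eq_Icc, Finset.sum_Ico_eq_sum_range]
    exact Finset.sum_congr rfl fun i _ => by rw [add_comm 1 i]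
  exact key.comp (tendsto_atTop_atTop.mpr fun b => ⟨2*b, fun a ha => by omega⟩)
end
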